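/- arXiv:2510.14034 — 2 statements merged into one kernel-verified Lean document; each statement's English description precedes it below -/
import Mathlib

section
/- Let E be a real Banach space, let t ∈ ℝ and τ > 0, and let f : ℝ → E be twice continuously differentiable on the interval [t − τ, t + τ]. Then ‖f(t) − (f(t+τ) + f(t−τ))/2‖² ≤ (τ³/6)·∫_{t−τ}^{t+τ} ‖f''(s)‖² ds. -/
open MeasureTheory

open intervalIntegral in
private lemma cs_integral {a b : ℝ} (hab : a ≤ b) {u v : ℝ → ℝ}
    (hu : ContinuousOn u (Set.Icc a b)) (hv : ContinuousOn v (Set.Icc a b)) :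
    (∫ s in a..b, u s * v s) ^ 2 ≤ (∫ s in a..b, u s ^ 2) * (∫ s in a..b, v s ^ 2) := by
  have huIcc : Set.uIcc a b = Set.Icc a b := Set.uIcc_of_le hab
  have hu' : ContinuousOn u (Set.uIcc a b) := huIcc ▸ hu
  have hv' : ContinuousOn v (Set.uIcc a b) := huIcc ▸ hv
  have h1 : IntervalIntegrable (fun s => u s ^ 2) volume a b :=
    ((hu'.mul hu').congr (by intro x hx; rw [Pi.mul_apply]; ring)).intervalIntegrable
  have h2 : IntervalIntegrable (fun s => u s * v s) volume a b :=
    (hu'.mul hv').intervalIntegrable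
  have h3 : IntervalIntegrable (fun s => v s ^ 2) volume a b :=
    ((hv'.mul hv').congr (by intro x hx; rw [Pi.mul_apply]; ring)).intervalIntegrable
  set P := ∫ s in a..b, u s ^ 2 with hP
  set Q := ∫ s in a..b, u s * v s with hQ
  set R := ∫ s in a..b, v s ^ 2 with hR
  have key : ∀ lam : ℝ, 0 ≤ P * (lam * lam) + (2 * Q) * lam + R := by
    intro lam
    have hnn : 0 ≤ ∫ s in a..b,
        (lam * lam * u s ^ 2 + 2 * lam * (u s * v s) + v s ^ 2) := by
      apply intervalIntegral.integral_nonneg hab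
      intro x _
      have : lam * lam * u x ^ 2 + 2 * lam * (u x * v x) + v x ^ 2
          = (lam * u x + v x) ^ 2 := by ring
      rw [this]; positivity
    have hsplit : (∫ s in a..b,
        (lam * lam * u s ^ 2 + 2 * lam * (u s * v s) + v s ^ 2))
        = lam * lam * P + 2 * lam * Q + R := by
      rw [intervalIntegral.integral_add (((h1.const_mul _).add (h2.const_mul _))) h3,
        intervalIntegral.integral_add (h1.const_mul _) (h2.const_mul _),
        intervalIntegral.integral_const_mul, intervalIntegral.integral_const_mul]
    rw [hsplit] at hnn
    linarith
  have := discrim_le_zero key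
  rw [discrim] at this
  nlinarith [this]

set_option maxHeartbeats 1000000 in
/-- Single-step consistency estimate for the two-level average of the
Crank–Nicolson Leap-Frog scheme:
`‖f(t) - (f(t+τ) + f(t-τ))/2‖² ≤ (τ³/6) ∫_{t-τ}^{t+τ} ‖f''(s)‖² ds`. -/
theorem two_level_average_consistency
    {E : Type*} [NormedAddCommGroup E] [NormedSpace ℝ E] [CompleteSpace E]
    (t τ : ℝ) (hτ : 0 < τ) (f f1 f2 : ℝ → E)
    (hf : ∀ s ∈ Set.Icc (t - τ) (t + τ),
      HasDerivWithinAt f (f1 s) (Set.Icc (t - τ) (t + τ)) s)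
    (hf1 : ∀ s ∈ Set.Icc (t - τ) (t + τ),
      HasDerivWithinAt f1 (f2 s) (Set.Icc (t - τ) (t + τ)) s)
    (hf2 : ContinuousOn f2 (Set.Icc (t - τ) (t + τ))) :
    ‖f t - (2 : ℝ)⁻¹ • (f (t + τ) + f (t - τ))‖ ^ 2 ≤
      τ ^ 3 / 6 * ∫ s in (t - τ)..(t + τ), ‖f2 s‖ ^ 2 := by
  set a := t - τ with ha
  set b := t + τ with hb
  have hat : a ≤ t := by simp [ha]; linarith
  have htb : t ≤ b := by simp [hb]; linarith
  have hab : a ≤ b := hat.trans htb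
  have htmem : t ∈ Set.Icc a b := ⟨hat, htb⟩
  -- continuity of f, f1, f2 on [a,b]
  have hfc : ContinuousOn f (Set.Icc a b) := fun x hx => (hf x hx).continuousWithinAt
  have hf1c : ContinuousOn f1 (Set.Icc a b) := fun x hx => (hf1 x hx).continuousWithinAt
  -- true derivatives at interior points
  have hfd : ∀ x ∈ Set.Ioo a b, HasDerivAt f (f1 x) x := fun x hx =>
    (hf x (Set.Ioo_subset_Icc_self hx)).hasDerivAt (Icc_mem_nhds hx.1 hx.2)
  have hf1d : ∀ x ∈ Set.Ioo a b, HasDerivAt f1 (f2 x) x := fun x hx =>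
    (hf1 x (Set.Ioo_subset_Icc_self hx)).hasDerivAt (Icc_mem_nhds hx.1 hx.2)
  -- Taylor identity on [t, b] via g s = f s + (b - s) • f1 s
  have hIcc_tb : Set.Icc t b ⊆ Set.Icc a b := Set.Icc_subset_Icc hat le_rfl
  have hIcc_at : Set.Icc a t ⊆ Set.Icc a b := Set.Icc_subset_Icc le_rfl htb
  have hgderiv : ∀ x ∈ Set.Ioo a b,
      HasDerivAt (fun s => f s + (b - s) • f1 s) ((b - x) • f2 x) x := by
    intro x hx
    have h1 : HasDerivAt (fun s : ℝ => b - s) (-1) x := by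
      simpa using (hasDerivAt_id x).const_sub b
    have := (hfd x hx).add (h1.smul (hf1d x hx))
    convert this using 1
    · rfl
    · module
  have hint2 : IntervalIntegrable f2 volume a b :=
    hf2.intervalIntegrable_of_Icc hab
  have hA : (∫ s in t..b, (b - s) • f2 s) = f b - f t - τ • f1 t := by
    have hcont : ContinuousOn (fun s => f s + (b - s) • f1 s) (Set.Icc t b) :=
      ((hfc.add (((continuous_const.sub continuous_id).continuousOn).smul hf1c)).mono hIcc_tb)
    have hderiv : ∀ x ∈ Set.Ioo t b,
        HasDerivWithinAt (fun s => f s + (b - s) • f1 s) ((b - x) • f2 x) (Set.Ioi x) x := by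
      intro x hx
      exact (hgderiv x ⟨lt_of_le_of_lt hat hx.1, hx.2⟩).hasDerivWithinAt
    have hint : IntervalIntegrable (fun s => (b - s) • f2 s) volume t b := by
      apply ContinuousOn.intervalIntegrable
      rw [Set.uIcc_of_le htb]
      exact ((continuous_const.sub continuous_id).continuousOn).smul (hf2.mono hIcc_tb)
    have := intervalIntegral.integral_eq_sub_of_hasDeriv_right_of_le htb hcont hderiv hint
    rw [this]
    have h2 : b - t = τ := by simp [hb]
    rw [h2]
    module
  have hB : (∫ s in a..t, (s - a) • f2 s) = f a - f t + τ • f1 t := by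
    have hcont : ContinuousOn (fun s => (s - a) • f1 s - f s) (Set.Icc a t) :=
      ((((continuous_id.sub continuous_const).continuousOn).smul hf1c).sub hfc).mono hIcc_at
    have hderiv : ∀ x ∈ Set.Ioo a t,
        HasDerivWithinAt (fun s => (s - a) • f1 s - f s) ((x - a) • f2 x) (Set.Ioi x) x := by
      intro x hx
      have hx' : x ∈ Set.Ioo a b := ⟨hx.1, lt_of_lt_of_le hx.2 htb⟩
      have h1 : HasDerivAt (fun s : ℝ => s - a) 1 x := by
        simpa using (hasDerivAt_id x).sub_const a
      have := (h1.smul (hf1d x hx')).sub (hfd x hx')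
      refine HasDerivAt.hasDerivWithinAt ?_
      convert this using 1
      · rfl
      · module
    have hint : IntervalIntegrable (fun s => (s - a) • f2 s) volume a t := by
      apply ContinuousOn.intervalIntegrable
      rw [Set.uIcc_of_le hat]
      exact ((continuous_id.sub continuous_const).continuousOn).smul (hf2.mono hIcc_at)
    have := intervalIntegral.integral_eq_sub_of_hasDeriv_right_of_le hat hcont hderiv hint
    rw [this]
    have h1 : t - a = τ := by simp [ha]
    rw [h1]
    module
  -- norm bounds via weighted integrals
  set A := ∫ s in t..b, (b - s) • f2 s with hAdef
  set B := ∫ s in a..t, (s - a) • f2 s with hBdef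
  have hkey : f t - (2 : ℝ)⁻¹ • (f b + f a) = -((2 : ℝ)⁻¹ • (A + B)) := by
    rw [hA, hB]
    module
  have hnormeq : ‖f t - (2 : ℝ)⁻¹ • (f b + f a)‖ = 2⁻¹ * ‖A + B‖ := by
    rw [hkey, norm_neg, norm_smul]
    simp
  set X := ∫ s in t..b, |b - s| * ‖f2 s‖ with hXdef
  set Y := ∫ s in a..t, |s - a| * ‖f2 s‖ with hYdef
  have hXnn : 0 ≤ X := intervalIntegral.integral_nonneg htb
    (fun x _ => mul_nonneg (abs_nonneg _) (norm_nonneg _))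
  have hYnn : 0 ≤ Y := intervalIntegral.integral_nonneg hat
    (fun x _ => mul_nonneg (abs_nonneg _) (norm_nonneg _))
  have hAX : ‖A‖ ≤ X := by
    calc ‖A‖ ≤ ∫ s in t..b, ‖(b - s) • f2 s‖ :=
          intervalIntegral.norm_integral_le_integral_norm htb
      _ = X := by
          rw [hXdef]
          congr 1
          funext s
          rw [norm_smul, Real.norm_eq_abs]
  have hBY : ‖B‖ ≤ Y := by
    calc ‖B‖ ≤ ∫ s in a..t, ‖(s - a) • f2 s‖ :=
          intervalIntegral.norm_integral_le_integral_norm hat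
      _ = Y := by
          rw [hYdef]
          congr 1
          funext s
          rw [norm_smul, Real.norm_eq_abs]
  -- Cauchy–Schwarz bounds
  have hw1 : (∫ s in t..b, (b - s) ^ 2) = τ ^ 3 / 3 := by
    rw [show (fun s => (b - s) ^ 2) = (fun s => ((fun x : ℝ => x ^ 2) (b - s))) from rfl,
      intervalIntegral.integral_comp_sub_left (fun x : ℝ => x ^ 2) b]
    simp [integral_pow, hb]
    ring
  have hw2 : (∫ s in a..t, (s - a) ^ 2) = τ ^ 3 / 3 := by
    rw [show (fun s => (s - a) ^ 2) = (fun s => ((fun x : ℝ => x ^ 2) (s - a))) from rfl,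
      intervalIntegral.integral_comp_sub_right (fun x : ℝ => x ^ 2) a]
    simp [integral_pow, ha]
    ring
  set J1 := ∫ s in t..b, ‖f2 s‖ ^ 2 with hJ1
  set J0 := ∫ s in a..t, ‖f2 s‖ ^ 2 with hJ0
  have hJ1nn : 0 ≤ J1 := intervalIntegral.integral_nonneg htb (fun x _ => sq_nonneg _)
  have hJ0nn : 0 ≤ J0 := intervalIntegral.integral_nonneg hat (fun x _ => sq_nonneg _)
  have hX2 : X ^ 2 ≤ τ ^ 3 / 3 * J1 := by
    have hcs := cs_integral htb
      (u := fun s => |b - s|) (v := fun s => ‖f2 s‖)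
      ((continuous_const.sub continuous_id).abs.continuousOn)
      ((hf2.mono hIcc_tb).norm)
    rw [hJ1]
    calc X ^ 2 ≤ (∫ s in t..b, |b - s| ^ 2) * ∫ s in t..b, ‖f2 s‖ ^ 2 := hcs
      _ = τ ^ 3 / 3 * ∫ s in t..b, ‖f2 s‖ ^ 2 := by
          rw [show (fun s => |b - s| ^ 2) = fun s => (b - s) ^ 2 from funext fun s => sq_abs _,
            hw1]
  have hY2 : Y ^ 2 ≤ τ ^ 3 / 3 * J0 := by
    have hcs := cs_integral hat
      (u := fun s => |s - a|) (v := fun s => ‖f2 s‖)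
      ((continuous_id.sub continuous_const).abs.continuousOn)
      ((hf2.mono hIcc_at).norm)
    rw [hJ0]
    calc Y ^ 2 ≤ (∫ s in a..t, |s - a| ^ 2) * ∫ s in a..t, ‖f2 s‖ ^ 2 := hcs
      _ = τ ^ 3 / 3 * ∫ s in a..t, ‖f2 s‖ ^ 2 := by
          rw [show (fun s => |s - a| ^ 2) = fun s => (s - a) ^ 2 from funext fun s => sq_abs _,
            hw2]
  -- glue the two integrals
  have hJint : (∫ s in a..b, ‖f2 s‖ ^ 2) = J0 + J1 := by
    rw [hJ0, hJ1]
    rw [← intervalIntegral.integral_add_adjacent_intervals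
      (a := a) (b := t) (c := b) ?_ ?_]
    · apply ContinuousOn.intervalIntegrable
      rw [Set.uIcc_of_le hat]
      exact ((hf2.mono hIcc_at).norm).pow 2
    · apply ContinuousOn.intervalIntegrable
      rw [Set.uIcc_of_le htb]
      exact ((hf2.mono hIcc_tb).norm).pow 2
  have hnorm : ‖f t - (2 : ℝ)⁻¹ • (f b + f a)‖ ≤ 2⁻¹ * (X + Y) := by
    rw [hnormeq]
    have := norm_add_le A B
    nlinarith [hAX, hBY]
  have hLnn : (0:ℝ) ≤ 2⁻¹ * (X + Y) := by positivity
  calc ‖f t - (2 : ℝ)⁻¹ • (f b + f a)‖ ^ 2 ≤ (2⁻¹ * (X + Y)) ^ 2 := by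
        apply pow_le_pow_left₀ (norm_nonneg _) hnorm
    _ ≤ τ ^ 3 / 6 * ∫ s in a..b, ‖f2 s‖ ^ 2 := by
        rw [hJint]
        nlinarith [sq_nonneg (X - Y), hX2, hY2]
end

section
/- Let Ω be a bounded open subset of ℝ². There exists a constant C > 0, depending only on Ω, such that for all continuously differentiable vector fields u, v, w : ℝ² → ℝ² with compact support contained in Ω one has |B(u, v, w)| ≤ C·‖u‖_{L²}^{1/2}·‖∇u‖_{L²}^{1/2}·‖∇v‖_{L²}·‖∇w‖_{L²}. -/
open MeasureTheory

/-- The convective term `((u·∇)v)·w` at a point `x`, where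
`((u·∇)v)_i = ∑_j u_j ∂_j v_i`. -/
noncomputable def convTerm (u v w : (Fin 2 → ℝ) → (Fin 2 → ℝ)) (x : Fin 2 → ℝ) : ℝ :=
  ∑ i, fderiv ℝ v x (u x) i * w x i

/-- The divergence `div u = ∑_j ∂_j u_j` at a point `x`. -/
noncomputable def divg (u : (Fin 2 → ℝ) → (Fin 2 → ℝ)) (x : Fin 2 → ℝ) : ℝ :=
  ∑ j, fderiv ℝ u x (Pi.single j 1) j

/-- The trilinear form
`B(u, v, w) = ∫ ((u·∇)v)·w dx + (1/2) ∫ (div u)(v·w) dx`. -/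
noncomputable def Bform (u v w : (Fin 2 → ℝ) → (Fin 2 → ℝ)) : ℝ :=
  (∫ x, convTerm u v w x) + (1 / 2) * ∫ x, divg u x * (∑ i, v x i * w x i)

/-- The `L²` norm `‖u‖_{L²} = (∫ |u(x)|² dx)^{1/2}`. -/
noncomputable def normL2 (u : (Fin 2 → ℝ) → (Fin 2 → ℝ)) : ℝ :=
  Real.sqrt (∫ x, ∑ i, (u x i) ^ 2)

/-- The `L²` norm of the gradient:
`‖∇u‖_{L²} = (∫ ∑_i ∑_j (∂_j u_i)² dx)^{1/2}`. -/
noncomputable def gradL2 (u : (Fin 2 → ℝ) → (Fin 2 → ℝ)) : ℝ :=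
  Real.sqrt (∫ x, ∑ i, ∑ j, (fderiv ℝ u x (Pi.single j 1) i) ^ 2)

open Real Set Function
open scoped NNReal ENNReal

local notation "E2" => (Fin 2 → ℝ)

lemma clm_apply_eq {F : Type*} [NormedAddCommGroup F] [NormedSpace ℝ F]
    (T : E2 →L[ℝ] F) (y : E2) : T y = ∑ j, y j • T (Pi.single j 1) := by
  conv_lhs => rw [← Finset.univ_sum_single y]
  rw [map_sum]
  congr 1; funext j
  have h : Pi.single j (y j) = y j • (Pi.single j 1 : Fin 2 → ℝ) := by
    funext k
    rcases eq_or_ne k j with rfl | hk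
    · simp
    · simp [Pi.single_eq_of_ne hk]
  rw [h, _root_.map_smul]

lemma rowsum_bound (T : E2 →L[ℝ] E2) (y : E2) :
    ∑ i, (T y i) ^ 2 ≤ (∑ j, y j ^ 2) * (∑ i, ∑ j, (T (Pi.single j 1) i) ^ 2) := by
  rw [Finset.mul_sum]
  refine Finset.sum_le_sum fun i _ => ?_
  have h : T y i = ∑ j, y j * T (Pi.single j 1) i := by
    rw [clm_apply_eq]; simp
  rw [h]
  exact Finset.sum_mul_sq_le_sq_mul_sq _ _ _

lemma rowsum_bound' (T : E2 →L[ℝ] ℝ) (y : E2) :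
    (T y) ^ 2 ≤ (∑ j, y j ^ 2) * (∑ j, (T (Pi.single j 1)) ^ 2) := by
  have h : T y = ∑ j, y j * T (Pi.single j 1) := by
    rw [clm_apply_eq]; simp
  rw [h]
  exact Finset.sum_mul_sq_le_sq_mul_sq _ _ _

lemma sq_sum_le_two_norm_sq (y : E2) : ∑ j, y j ^ 2 ≤ 2 * ‖y‖ ^ 2 := by
  have h : ∀ j, y j ^ 2 ≤ ‖y‖ ^ 2 := fun j => by
    have := norm_le_pi_norm y j
    have h2 : |y j| ≤ ‖y‖ := by simpa [Real.norm_eq_abs] using this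
    calc y j ^ 2 = |y j| ^ 2 := (sq_abs _).symm
      _ ≤ ‖y‖ ^ 2 := by gcongr
  calc ∑ j, y j ^ 2 ≤ ∑ _j : Fin 2, ‖y‖ ^ 2 := Finset.sum_le_sum fun j _ => h j
    _ = 2 * ‖y‖ ^ 2 := by simp [Finset.sum_const, mul_comm]

noncomputable def Ksob : ℝ := (eLpNormLESNormFDerivOneConst (volume : Measure E2) 2 : ℝ)

lemma Ksob_nonneg : 0 ≤ Ksob := by unfold Ksob; positivity

lemma myCS {f g : E2 → ℝ} (hfc : Continuous f) (hfs : HasCompactSupport f)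
    (hgc : Continuous g) (hgs : HasCompactSupport g)
    (hf0 : ∀ x, 0 ≤ f x) (hg0 : ∀ x, 0 ≤ g x) :
    ∫ x, f x * g x ≤ Real.sqrt (∫ x, f x ^ 2) * Real.sqrt (∫ x, g x ^ 2) := by
  have hconj : Real.HolderConjugate 2 2 := Real.HolderConjugate.two_two
  have h := integral_mul_le_Lp_mul_Lq_of_nonneg (μ := volume) hconj
    (Filter.Eventually.of_forall hf0) (Filter.Eventually.of_forall hg0)
    (hfc.memLp_of_hasCompactSupport hfs) (hgc.memLp_of_hasCompactSupport hgs)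
  have e1 : ∀ (h : E2 → ℝ), (∫ x, h x ^ (2:ℝ)) = ∫ x, h x ^ 2 := by
    intro h; congr 1; funext x; rw [show (2:ℝ) = ((2:ℕ):ℝ) by norm_num, Real.rpow_natCast]
  rw [e1 f, e1 g] at h
  calc ∫ x, f x * g x ≤ (∫ x, f x ^ 2) ^ (1/2:ℝ) * (∫ x, g x ^ 2) ^ (1/2:ℝ) := h
    _ = Real.sqrt (∫ x, f x ^ 2) * Real.sqrt (∫ x, g x ^ 2) := by
        rw [Real.sqrt_eq_rpow, Real.sqrt_eq_rpow]

lemma sobolev_real {F : Type*} [NormedAddCommGroup F] [NormedSpace ℝ F] {f : E2 → F}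
    (hf : ContDiff ℝ 1 f) (h2f : HasCompactSupport f) :
    Real.sqrt (∫ x, ‖f x‖ ^ 2) ≤ Ksob * ∫ x, ‖fderiv ℝ f x‖ := by
  unfold Ksob
  have hconj : NNReal.HolderConjugate (Module.finrank ℝ E2) 2 := by
    have : Module.finrank ℝ E2 = 2 := by simp
    rw [this]
    exact_mod_cast NNReal.HolderConjugate.two_two
  have key := eLpNorm_le_eLpNorm_fderiv_one (volume : Measure E2) hf h2f hconj
  have hDfc : Continuous (fderiv ℝ f) := hf.continuous_fderiv one_ne_zero
  have hDfs : HasCompactSupport (fderiv ℝ f) := (HasCompactSupport.fderiv ℝ h2f)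
  have hDfi : Integrable (fderiv ℝ f) := hDfc.integrable_of_hasCompactSupport hDfs
  have hfsq : Integrable (fun x => ‖f x‖ ^ 2) :=
    ((hf.continuous.norm.pow 2)).integrable_of_hasCompactSupport
      (h2f.comp_left (g := fun y => ‖y‖ ^ 2) (by simp) :)
  -- rewrite RHS of key
  have hR : eLpNorm (fderiv ℝ f) 1 volume = ENNReal.ofReal (∫ x, ‖fderiv ℝ f x‖) := by
    rw [eLpNorm_one_eq_lintegral_enorm, ← ofReal_integral_norm_eq_lintegral_enorm hDfi]
  have hL : eLpNorm f (2:ℝ≥0) volume = (ENNReal.ofReal (∫ x, ‖f x‖ ^ 2)) ^ (1/2:ℝ) := by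
    rw [show ((2:ℝ≥0):ℝ≥0∞) = (2:ℝ≥0∞) by norm_cast,
      eLpNorm_eq_lintegral_rpow_enorm_toReal (by norm_num) (by norm_num)]
    congr 1
    rw [ofReal_integral_eq_lintegral_ofReal hfsq
        (Filter.Eventually.of_forall fun x => sq_nonneg _)]
    congr 1; funext x
    rw [← ofReal_norm, ENNReal.toReal_ofNat,
        show (2:ℝ) = ((2:ℕ):ℝ) by norm_num, ENNReal.rpow_natCast,
        ← ENNReal.ofReal_pow (norm_nonneg _)]
  rw [hL, hR] at key
  have hne : (eLpNormLESNormFDerivOneConst (volume : Measure E2) 2 : ℝ≥0∞) *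
      ENNReal.ofReal (∫ x, ‖fderiv ℝ f x‖) ≠ ⊤ := by
    exact ENNReal.mul_ne_top ENNReal.coe_ne_top ENNReal.ofReal_ne_top
  have := ENNReal.toReal_mono hne key
  rw [ENNReal.toReal_mul, ENNReal.coe_toReal,
    ENNReal.toReal_ofReal (integral_nonneg fun x => norm_nonneg _)] at this
  have hLto : ((ENNReal.ofReal (∫ x, ‖f x‖ ^ 2)) ^ (1/2:ℝ)).toReal
      = Real.sqrt (∫ x, ‖f x‖ ^ 2) := by
    rw [← ENNReal.toReal_rpow, ENNReal.toReal_ofReal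
      (integral_nonneg fun x => sq_nonneg _), Real.sqrt_eq_rpow]
  rw [hLto] at this
  exact this

noncomputable def enq (f : E2 → E2) (x : E2) : ℝ := ∑ i, f x i ^ 2
noncomputable def gsq (f : E2 → E2) (x : E2) : ℝ := ∑ i, ∑ j, (fderiv ℝ f x (Pi.single j 1) i) ^ 2

-- basic CS for finite sums
lemma abs_sum_le (a b : Fin 2 → ℝ) :
    |∑ i, a i * b i| ≤ Real.sqrt (∑ i, a i ^ 2) * Real.sqrt (∑ i, b i ^ 2) := by
  rw [← Real.sqrt_sq_eq_abs, ← Real.sqrt_mul (by positivity)]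
  exact Real.sqrt_le_sqrt (Finset.sum_mul_sq_le_sq_mul_sq _ _ _)

section facts
variable {u v w f : E2 → E2}

lemma enq_nonneg (f : E2 → E2) (x : E2) : 0 ≤ enq f x := by unfold enq; positivity
lemma gsq_nonneg (f : E2 → E2) (x : E2) : 0 ≤ gsq f x := by unfold gsq; positivity

lemma enq_cont (hf : Continuous f) : Continuous (enq f) := by
  unfold enq; fun_prop

lemma enq_supp (f : E2 → E2) : support (enq f) ⊆ tsupport f := by
  intro x hx
  by_contra hmem
  have : f x = 0 := image_eq_zero_of_notMem_tsupport hmem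
  simp [enq, this] at hx

lemma gsq_cont (hf : ContDiff ℝ 1 (f : E2 → E2)) : Continuous (gsq f) := by
  unfold gsq
  refine continuous_finset_sum _ fun i _ => continuous_finset_sum _ fun j _ => ?_
  have h : Continuous fun x => fderiv ℝ f x (Pi.single j 1) :=
    (hf.continuous_fderiv one_ne_zero).clm_apply continuous_const
  fun_prop

lemma gsq_supp (f : E2 → E2) : support (gsq f) ⊆ tsupport f := by
  intro x hx
  by_contra hmem
  have : fderiv ℝ f x = 0 := by
    by_contra h0
    exact hmem (support_fderiv_subset ℝ (by simpa [Function.mem_support] using h0))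
  simp [gsq, this] at hx

-- pointwise bound for convTerm-like sums
lemma conv_pointwise (T : E2 →L[ℝ] E2) (a c : E2) :
    |∑ i, T a i * c i| ≤
      Real.sqrt (∑ i, ∑ j, (T (Pi.single j 1) i) ^ 2) *
        (Real.sqrt (∑ j, a j ^ 2) * Real.sqrt (∑ i, c i ^ 2)) := by
  have h1 := abs_sum_le (fun i => T a i) c
  have h2 : ∑ i, (T a i) ^ 2 ≤ (∑ j, a j ^ 2) * (∑ i, ∑ j, (T (Pi.single j 1) i) ^ 2) :=
    rowsum_bound T a
  calc |∑ i, T a i * c i| ≤ Real.sqrt (∑ i, (T a i) ^ 2) * Real.sqrt (∑ i, c i ^ 2) := h1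
    _ ≤ Real.sqrt ((∑ j, a j ^ 2) * (∑ i, ∑ j, (T (Pi.single j 1) i) ^ 2)) *
        Real.sqrt (∑ i, c i ^ 2) :=
        mul_le_mul_of_nonneg_right (Real.sqrt_le_sqrt h2) (Real.sqrt_nonneg _)
    _ = _ := by
        rw [Real.sqrt_mul (by positivity)]
        ring

-- operator norm bound
lemma opnorm_le (T : E2 →L[ℝ] E2) :
    ‖T‖ ≤ Real.sqrt 2 * Real.sqrt (∑ i, ∑ j, (T (Pi.single j 1) i) ^ 2) := by
  refine T.opNorm_le_bound (by positivity) fun h => ?_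
  rw [pi_norm_le_iff_of_nonneg (by positivity)]
  intro i
  have happ : T h i = ∑ j, h j * T (Pi.single j 1) i := by
    rw [clm_apply_eq]; simp
  rw [Real.norm_eq_abs, happ]
  calc |∑ j, h j * T (Pi.single j 1) i|
      ≤ Real.sqrt (∑ j, h j ^ 2) * Real.sqrt (∑ j, (T (Pi.single j 1) i) ^ 2) := abs_sum_le _ _
    _ ≤ (Real.sqrt 2 * ‖h‖) * Real.sqrt (∑ i, ∑ j, (T (Pi.single j 1) i) ^ 2) := by
        have e1 : Real.sqrt (∑ j, h j ^ 2) ≤ Real.sqrt 2 * ‖h‖ := by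
          rw [show Real.sqrt 2 * ‖h‖ = Real.sqrt (2 * ‖h‖^2) by
            rw [Real.sqrt_mul (by norm_num), Real.sqrt_sq (norm_nonneg h)]]
          exact Real.sqrt_le_sqrt (sq_sum_le_two_norm_sq h)
        have e2 : Real.sqrt (∑ j, (T (Pi.single j 1) i) ^ 2)
            ≤ Real.sqrt (∑ i, ∑ j, (T (Pi.single j 1) i) ^ 2) := by
          apply Real.sqrt_le_sqrt
          exact Finset.single_le_sum (f := fun i => ∑ j, (T (Pi.single j 1) i) ^ 2)
            (fun i _ => by positivity) (Finset.mem_univ i)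
        exact mul_le_mul e1 e2 (Real.sqrt_nonneg _) (by positivity)
    _ = Real.sqrt 2 * Real.sqrt (∑ i, ∑ j, (T (Pi.single j 1) i) ^ 2) * ‖h‖ := by ring

end facts

lemma hcs_sq {g : E2 → ℝ} (h : HasCompactSupport g) :
    HasCompactSupport fun x => g x ^ 2 := by
  apply HasCompactSupport.of_support_subset_isCompact h
  intro x hx
  apply subset_closure
  simp only [Function.mem_support] at hx ⊢
  intro h0
  simp [h0] at hx

lemma hcs_cmul {g : E2 → ℝ} (c : ℝ) (h : HasCompactSupport g) :
    HasCompactSupport fun x => c * g x := by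
  apply HasCompactSupport.of_support_subset_isCompact h
  intro x hx
  apply subset_closure
  simp only [Function.mem_support] at hx ⊢
  intro h0
  simp [h0] at hx


section div_thm

lemma div_thm_zero {r : ℝ} (hr : 0 < r) (f : Fin 2 → E2 → ℝ)
    (f' : Fin 2 → E2 → E2 →L[ℝ] ℝ)
    (hd : ∀ x i, HasFDerivAt (f i) (f' i x) x)
    (hcont : Continuous fun x => ∑ i, f' i x (Pi.single i 1))
    (h0 : ∀ i x, r ≤ ‖x‖ → f i x = 0)
    (h0' : ∀ x, r ≤ ‖x‖ → ∀ i, f' i x = 0) :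
    ∫ x, ∑ i, f' i x (Pi.single i 1) = 0 := by
  set a : Fin 2 → ℝ := fun _ => -r with ha
  set b : Fin 2 → ℝ := fun _ => r with hb
  have hle : a ≤ b := fun i => by simp [ha, hb]; linarith
  have habs : ∀ (y : E2) (i : Fin 2), |y i| ≤ ‖y‖ := fun y i => by
    simpa [Real.norm_eq_abs] using norm_le_pi_norm y i
  have key := integral_divergence_of_hasFDerivAt_off_countable' (E := ℝ) (n := 1)
    a b hle f f' ∅ countable_empty
    (fun i => (continuous_iff_continuousAt.2 fun x => (hd x i).continuousAt).continuousOn)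
    (fun x _ i => hd x i)
    (hcont.continuousOn.integrableOn_compact isCompact_Icc)
  have hL : ∫ x in Icc a b, ∑ i, f' i x (Pi.single i 1) = ∫ x, ∑ i, f' i x (Pi.single i 1) := by
    apply setIntegral_eq_integral_of_forall_compl_eq_zero
    intro x hx
    have : r ≤ ‖x‖ := by
      by_contra hcon
      push_neg at hcon
      apply hx
      have hi : ∀ i, -r ≤ x i ∧ x i ≤ r := by
        intro i
        have h1 : |x i| < r := lt_of_le_of_lt (habs x i) hcon
        rw [abs_lt] at h1
        exact ⟨le_of_lt h1.1, le_of_lt h1.2⟩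
      exact ⟨fun i => (hi i).1, fun i => (hi i).2⟩
    simp [h0' x this]
  have hR : ∀ i : Fin 2,
      ((∫ x in Icc (a ∘ i.succAbove) (b ∘ i.succAbove), f i (i.insertNth (b i) x)) -
       ∫ x in Icc (a ∘ i.succAbove) (b ∘ i.succAbove), f i (i.insertNth (a i) x)) = 0 := by
    intro i
    have h1 : ∀ y : Fin 1 → ℝ, f i (Fin.insertNth (α := fun _ => ℝ) i (b i) y) = 0 := by
      intro y
      apply h0
      have hz : (Fin.insertNth (α := fun _ => ℝ) i (b i) y) i = r := by simp [hb]
      have h2 := habs (Fin.insertNth (α := fun _ => ℝ) i (b i) y) i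
      rw [hz, abs_of_pos hr] at h2
      exact h2
    have h2 : ∀ y : Fin 1 → ℝ, f i (Fin.insertNth (α := fun _ => ℝ) i (a i) y) = 0 := by
      intro y
      apply h0
      have hz : (Fin.insertNth (α := fun _ => ℝ) i (a i) y) i = -r := by simp [ha]
      have h2 := habs (Fin.insertNth (α := fun _ => ℝ) i (a i) y) i
      rw [hz, abs_neg, abs_of_pos hr] at h2
      exact h2
    simp [h1, h2]
  rw [hL] at key
  rw [key, Finset.sum_eq_zero fun i _ => hR i]

end div_thm

section ibp
variable {u v w : E2 → E2}

lemma comp_hasFDerivAt {f : E2 → E2} (hf : ContDiff ℝ 1 f) (x : E2) (i : Fin 2) :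
    HasFDerivAt (fun y => f y i)
      ((ContinuousLinearMap.proj i).comp (fderiv ℝ f x)) x :=
  ((ContinuousLinearMap.proj (R := ℝ) (φ := fun _ : Fin 2 => ℝ) i).hasFDerivAt).comp x
    (hf.differentiable one_ne_zero x).hasFDerivAt

lemma conv_cont (hu : Continuous u) (hv : ContDiff ℝ 1 v) (hw : Continuous w) :
    Continuous (convTerm u v w) := by
  unfold convTerm
  refine continuous_finset_sum _ fun i _ => ?_
  have h : Continuous fun x => fderiv ℝ v x (u x) :=
    (hv.continuous_fderiv one_ne_zero).clm_apply hu
  exact ((continuous_apply i).comp h).mul ((continuous_apply i).comp hw)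

lemma divg_cont (hu : ContDiff ℝ 1 u) : Continuous (divg u) := by
  unfold divg
  refine continuous_finset_sum _ fun j _ => ?_
  exact (continuous_apply j).comp ((hu.continuous_fderiv one_ne_zero).clm_apply continuous_const)

lemma conv_supp : support (convTerm u v w) ⊆ tsupport w := by
  intro x hx
  by_contra hmem
  have : w x = 0 := image_eq_zero_of_notMem_tsupport hmem
  simp [convTerm, this] at hx

lemma divg_supp : support (divg u) ⊆ tsupport u := by
  intro x hx
  by_contra hmem
  have : fderiv ℝ u x = 0 := by
    by_contra h0
    exact hmem (support_fderiv_subset ℝ (by simpa [Function.mem_support] using h0))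
  simp [divg, this] at hx

lemma ibp (hu : ContDiff ℝ 1 u) (h2u : HasCompactSupport u)
    (hv : ContDiff ℝ 1 v) (h2v : HasCompactSupport v)
    (hw : ContDiff ℝ 1 w) (h2w : HasCompactSupport w) :
    (∫ x, convTerm u v w x) + (∫ x, convTerm u w v x)
      + ∫ x, divg u x * (∑ i, v x i * w x i) = 0 := by
  classical
  set φ : E2 → ℝ := fun x => ∑ i, v x i * w x i with hφdef
  set Dφ : E2 → E2 →L[ℝ] ℝ := fun x => ∑ i,
      (v x i • ((ContinuousLinearMap.proj i).comp (fderiv ℝ w x)) +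
       w x i • ((ContinuousLinearMap.proj i).comp (fderiv ℝ v x))) with hDφdef
  have hφ : ∀ x, HasFDerivAt φ (Dφ x) x := by
    intro x
    exact HasFDerivAt.fun_sum fun i _ =>
      (comp_hasFDerivAt hv x i).mul (comp_hasFDerivAt hw x i)
  set f : Fin 2 → E2 → ℝ := fun j x => u x j * φ x with hfdef
  set f' : Fin 2 → E2 → E2 →L[ℝ] ℝ := fun j x =>
      u x j • Dφ x + φ x • ((ContinuousLinearMap.proj j).comp (fderiv ℝ u x)) with hf'def
  have hd : ∀ x j, HasFDerivAt (f j) (f' j x) x := fun x j =>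
    (comp_hasFDerivAt hu x j).mul (hφ x)
  -- divergence identity
  have hsum : ∀ x, ∑ j, f' j x (Pi.single j 1)
      = convTerm u v w x + convTerm u w v x + divg u x * φ x := by
    intro x
    have e1 : ∀ j, f' j x (Pi.single j 1)
        = u x j * Dφ x (Pi.single j 1) + φ x * fderiv ℝ u x (Pi.single j 1) j := by
      intro j; simp [hf'def]
    rw [Finset.sum_congr rfl fun j _ => e1 j, Finset.sum_add_distrib, ← Finset.mul_sum]
    have e2 : ∑ j, u x j * Dφ x (Pi.single j 1) = Dφ x (u x) := by
      rw [clm_apply_eq (Dφ x) (u x)]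
      simp [smul_eq_mul]
    have e3 : Dφ x (u x) = convTerm u v w x + convTerm u w v x := by
      simp only [hDφdef, ContinuousLinearMap.sum_apply, ContinuousLinearMap.add_apply,
        ContinuousLinearMap.smul_apply, ContinuousLinearMap.comp_apply,
        ContinuousLinearMap.proj_apply, smul_eq_mul]
      rw [Finset.sum_add_distrib]
      unfold convTerm
      rw [add_comm]
      congr 1
      · exact Finset.sum_congr rfl fun i _ => by ring
      · exact Finset.sum_congr rfl fun i _ => by ring
    rw [e2, e3]
    unfold divg
    ring
  -- support radius
  obtain ⟨r₀, hr₀⟩ := h2u.isBounded.subset_closedBall 0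
  set r : ℝ := max r₀ 0 + 1 with hrdef
  have hr : 0 < r := by positivity
  have hout : ∀ x : E2, r ≤ ‖x‖ → x ∉ tsupport u := by
    intro x hx hmem
    have := hr₀ hmem
    simp [Metric.mem_closedBall] at this
    have : ‖x‖ ≤ r₀ := by simpa [dist_eq_norm] using this
    have : r ≤ r₀ := le_trans hx this
    simp [hrdef] at this
    linarith [le_max_left r₀ (0:ℝ)]
  have h0 : ∀ j (x : E2), r ≤ ‖x‖ → f j x = 0 := by
    intro j x hx
    have hu0 : u x = 0 := image_eq_zero_of_notMem_tsupport (hout x hx)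
    simp [hfdef, hu0]
  have h0' : ∀ (x : E2), r ≤ ‖x‖ → ∀ j, f' j x = 0 := by
    intro x hx j
    have hu0 : u x = 0 := image_eq_zero_of_notMem_tsupport (hout x hx)
    have hDu0 : fderiv ℝ u x = 0 := by
      by_contra h0
      exact (hout x hx) (support_fderiv_subset ℝ (by simpa [Function.mem_support] using h0))
    simp [hf'def, hu0, hDu0]
  have hcont : Continuous fun x => ∑ j, f' j x (Pi.single j 1) := by
    have : (fun x => ∑ j, f' j x (Pi.single j 1))
        = fun x => convTerm u v w x + convTerm u w v x + divg u x * φ x := funext hsum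
    rw [this]
    have hφc : Continuous φ := by
      apply continuous_finset_sum
      intro i _
      exact ((continuous_apply i).comp hv.continuous).mul ((continuous_apply i).comp hw.continuous)
    exact ((conv_cont hu.continuous hv hw.continuous).add
      (conv_cont hu.continuous hw hv.continuous)).add ((divg_cont hu).mul hφc)
  have key := div_thm_zero hr f f' hd hcont h0 h0'
  rw [funext hsum] at key
  -- split the integral
  have hφc : Continuous φ := by
    apply continuous_finset_sum
    intro i _
    exact ((continuous_apply i).comp hv.continuous).mul ((continuous_apply i).comp hw.continuous)
  have hi1 : Integrable (convTerm u v w) :=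
    (conv_cont hu.continuous hv hw.continuous).integrable_of_hasCompactSupport
      (HasCompactSupport.of_support_subset_isCompact h2w conv_supp)
  have hi2 : Integrable (convTerm u w v) :=
    (conv_cont hu.continuous hw hv.continuous).integrable_of_hasCompactSupport
      (HasCompactSupport.of_support_subset_isCompact h2v conv_supp)
  have hi3 : Integrable (fun x => divg u x * φ x) :=
    ((divg_cont hu).mul hφc).integrable_of_hasCompactSupport
      (HasCompactSupport.of_support_subset_isCompact h2u
        (subset_trans (support_mul_subset_left _ _) divg_supp))
  have hsplit : (∫ x, (convTerm u v w x + convTerm u w v x + divg u x * φ x))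
      = (∫ x, convTerm u v w x) + (∫ x, convTerm u w v x) + ∫ x, divg u x * φ x := by
    rw [integral_add (f := fun x => convTerm u v w x + convTerm u w v x)
      (g := fun x => divg u x * φ x) (hi1.add hi2) hi3,
      integral_add (f := fun x => convTerm u v w x) (g := fun x => convTerm u w v x) hi1 hi2]
  rw [hsplit] at key
  simpa [hφdef] using key

section LP
variable {u v : E2 → E2}

lemma sqrt_enq_cont (hf : Continuous u) : Continuous fun x => Real.sqrt (enq u x) :=
  Real.continuous_sqrt.comp (enq_cont hf)
lemma sqrt_gsq_cont (hf : ContDiff ℝ 1 u) : Continuous fun x => Real.sqrt (gsq u x) :=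
  Real.continuous_sqrt.comp (gsq_cont hf)
lemma sqrt_enq_supp (h2u : HasCompactSupport u) :
    HasCompactSupport fun x => Real.sqrt (enq u x) := by
  apply HasCompactSupport.of_support_subset_isCompact h2u
  intro x hx
  apply enq_supp u
  intro h0
  simp [Function.mem_support, h0] at hx
lemma sqrt_gsq_supp (h2u : HasCompactSupport u) :
    HasCompactSupport fun x => Real.sqrt (gsq u x) := by
  apply HasCompactSupport.of_support_subset_isCompact h2u
  intro x hx
  apply gsq_supp u
  intro h0
  simp [Function.mem_support, h0] at hx
lemma enq_hcs (h2u : HasCompactSupport u) : HasCompactSupport (enq u) :=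
  HasCompactSupport.of_support_subset_isCompact h2u (enq_supp u)
lemma gsq_hcs (h2u : HasCompactSupport u) : HasCompactSupport (gsq u) :=
  HasCompactSupport.of_support_subset_isCompact h2u (gsq_supp u)

lemma int_enq_nonneg (u : E2 → E2) : 0 ≤ ∫ x, enq u x := integral_nonneg (enq_nonneg u)
lemma int_gsq_nonneg (u : E2 → E2) : 0 ≤ ∫ x, gsq u x := integral_nonneg (gsq_nonneg u)

/-- Ladyzhenskaya inequality -/
lemma lady (hu : ContDiff ℝ 1 u) (h2u : HasCompactSupport u) :
    Real.sqrt (∫ x, (enq u x) ^ 2) ≤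
      (2 * Real.sqrt 2 * Ksob) * (Real.sqrt (∫ x, enq u x) * Real.sqrt (∫ x, gsq u x)) := by
  classical
  set φ : E2 → ℝ := enq u with hφdef
  set Dφ : E2 → E2 →L[ℝ] ℝ := fun x => ∑ i,
      (u x i • ((ContinuousLinearMap.proj i).comp (fderiv ℝ u x)) +
       u x i • ((ContinuousLinearMap.proj i).comp (fderiv ℝ u x))) with hDφdef
  have hφeq : φ = fun x => ∑ i, u x i * u x i := by
    funext x; simp [hφdef, enq, sq]
  have hφd : ∀ x, HasFDerivAt φ (Dφ x) x := by
    intro x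
    rw [hφeq]
    exact HasFDerivAt.fun_sum fun i _ =>
      (comp_hasFDerivAt hu x i).mul (comp_hasFDerivAt hu x i)
  have hφC : ContDiff ℝ 1 φ := by
    rw [hφeq]
    exact ContDiff.sum fun i _ =>
      ((contDiff_pi.mp hu i)).mul ((contDiff_pi.mp hu i))
  have h2φ : HasCompactSupport φ := enq_hcs h2u
  have hsob := sobolev_real hφC h2φ
  have hnorm : (∫ x, ‖φ x‖ ^ 2) = ∫ x, (enq u x) ^ 2 := by
    congr 1; funext x; simp [hφdef, Real.norm_eq_abs, sq_abs]
  rw [hnorm] at hsob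
  -- bound the derivative norm pointwise
  have hbd : ∀ x, ‖fderiv ℝ φ x‖ ≤
      2 * Real.sqrt 2 * (Real.sqrt (enq u x) * Real.sqrt (gsq u x)) := by
    intro x
    rw [(hφd x).fderiv]
    refine ContinuousLinearMap.opNorm_le_bound _ (by positivity) fun h => ?_
    have happ : Dφ x h = ∑ i, (2 * u x i) * (fderiv ℝ u x h i) := by
      simp only [hDφdef, ContinuousLinearMap.sum_apply, ContinuousLinearMap.add_apply,
        ContinuousLinearMap.smul_apply, ContinuousLinearMap.comp_apply,
        ContinuousLinearMap.proj_apply, smul_eq_mul]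
      exact Finset.sum_congr rfl fun i _ => by ring
    rw [Real.norm_eq_abs, happ]
    calc |∑ i, (2 * u x i) * (fderiv ℝ u x h i)|
        ≤ Real.sqrt (∑ i, (2 * u x i) ^ 2) * Real.sqrt (∑ i, (fderiv ℝ u x h i) ^ 2) :=
          abs_sum_le _ _
      _ ≤ (2 * Real.sqrt (enq u x)) * (Real.sqrt 2 * ‖h‖ * Real.sqrt (gsq u x)) := by
          apply mul_le_mul
          · rw [show ∑ i, (2 * u x i)^2 = 4 * ∑ i, u x i ^ 2 by
              rw [Finset.mul_sum]; exact Finset.sum_congr rfl fun i _ => by ring,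
              Real.sqrt_mul (by norm_num)]
            rw [show Real.sqrt 4 = 2 by
              rw [show (4:ℝ) = 2^2 by norm_num, Real.sqrt_sq (by norm_num)]]
            rfl
          · have h1 : ∑ i, (fderiv ℝ u x h i) ^ 2 ≤ (2 * ‖h‖^2) * gsq u x := by
              calc ∑ i, (fderiv ℝ u x h i) ^ 2
                  ≤ (∑ j, h j ^ 2) * (∑ i, ∑ j, (fderiv ℝ u x (Pi.single j 1) i) ^ 2) :=
                    rowsum_bound _ _
                _ ≤ (2 * ‖h‖^2) * gsq u x := by
                    apply mul_le_mul_of_nonneg_right (sq_sum_le_two_norm_sq h) (gsq_nonneg u x)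
            calc Real.sqrt (∑ i, (fderiv ℝ u x h i) ^ 2)
                ≤ Real.sqrt ((2 * ‖h‖^2) * gsq u x) := Real.sqrt_le_sqrt h1
              _ = Real.sqrt 2 * ‖h‖ * Real.sqrt (gsq u x) := by
                  rw [Real.sqrt_mul (by positivity), Real.sqrt_mul (by norm_num),
                    Real.sqrt_sq (norm_nonneg h)]
          · exact Real.sqrt_nonneg _
          · positivity
      _ = 2 * Real.sqrt 2 * (Real.sqrt (enq u x) * Real.sqrt (gsq u x)) * ‖h‖ := by ring
  -- integrate the bound
  have hDφc : Continuous fun x => ‖fderiv ℝ φ x‖ := (hφC.continuous_fderiv one_ne_zero).norm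
  have hDφi : Integrable fun x => ‖fderiv ℝ φ x‖ :=
    hDφc.integrable_of_hasCompactSupport (HasCompactSupport.fderiv ℝ h2φ).norm
  have hgi : Integrable fun x =>
      2 * Real.sqrt 2 * (Real.sqrt (enq u x) * Real.sqrt (gsq u x)) := by
    apply Continuous.integrable_of_hasCompactSupport
    · exact (continuous_const.mul ((sqrt_enq_cont hu.continuous).mul (sqrt_gsq_cont hu)))
    · apply HasCompactSupport.of_support_subset_isCompact h2u
      intro x hx
      apply enq_supp u
      intro h0
      simp [Function.mem_support, h0] at hx
  have hint : (∫ x, ‖fderiv ℝ φ x‖) ≤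
      2 * Real.sqrt 2 * ∫ x, Real.sqrt (enq u x) * Real.sqrt (gsq u x) := by
    rw [← integral_const_mul]
    exact integral_mono hDφi (by simpa [mul_assoc] using hgi) fun x => by
      simpa [mul_assoc] using hbd x
  have hCS : (∫ x, Real.sqrt (enq u x) * Real.sqrt (gsq u x)) ≤
      Real.sqrt (∫ x, enq u x) * Real.sqrt (∫ x, gsq u x) := by
    have := myCS (sqrt_enq_cont hu.continuous) (sqrt_enq_supp h2u)
      (sqrt_gsq_cont hu) (sqrt_gsq_supp h2u)
      (fun x => Real.sqrt_nonneg _) (fun x => Real.sqrt_nonneg _)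
    simpa [Real.sq_sqrt (enq_nonneg u _), Real.sq_sqrt (gsq_nonneg u _)] using this
  calc Real.sqrt (∫ x, (enq u x) ^ 2) ≤ Ksob * ∫ x, ‖fderiv ℝ φ x‖ := hsob
    _ ≤ Ksob * (2 * Real.sqrt 2 * ∫ x, Real.sqrt (enq u x) * Real.sqrt (gsq u x)) :=
        mul_le_mul_of_nonneg_left hint Ksob_nonneg
    _ ≤ Ksob * (2 * Real.sqrt 2 * (Real.sqrt (∫ x, enq u x) * Real.sqrt (∫ x, gsq u x))) := by
        apply mul_le_mul_of_nonneg_left _ Ksob_nonneg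
        apply mul_le_mul_of_nonneg_left hCS (by positivity)
    _ = (2 * Real.sqrt 2 * Ksob) * (Real.sqrt (∫ x, enq u x) * Real.sqrt (∫ x, gsq u x)) := by
        ring

/-- Hölder with an indicator function -/
lemma holder_ind {g : E2 → ℝ} (hgc : Continuous g) (hgs : HasCompactSupport g)
    (hg0 : ∀ x, 0 ≤ g x) {R : ℝ} (hsupp : support g ⊆ Metric.closedBall 0 R) :
    ∫ x, g x ≤ Real.sqrt ((volume (Metric.closedBall (0:E2) R)).toReal) *
      Real.sqrt (∫ x, g x ^ 2) := by
  classical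
  set B := Metric.closedBall (0:E2) R with hB
  set ind : E2 → ℝ := B.indicator fun _ => (1:ℝ) with hind
  have hmem : MemLp ind (ENNReal.ofReal 2) volume :=
    memLp_indicator_const _ measurableSet_closedBall 1 (Or.inr measure_closedBall_lt_top.ne)
  have h := integral_mul_le_Lp_mul_Lq_of_nonneg (μ := volume)
    (Real.HolderConjugate.two_two : Real.HolderConjugate 2 2)
    (Filter.Eventually.of_forall hg0)
    (Filter.Eventually.of_forall fun x => Set.indicator_nonneg (fun _ _ => zero_le_one) x)
    (hgc.memLp_of_hasCompactSupport hgs) hmem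
  have hL : (∫ x, g x * ind x) = ∫ x, g x := by
    congr 1; funext x
    by_cases hx : x ∈ B
    · simp [hind, Set.indicator_of_mem hx]
    · have : g x = 0 := by
        by_contra h0
        exact hx (hsupp h0)
      simp [this]
  have hrp : ∀ t : ℝ, 0 ≤ t → t ^ (2:ℝ) = t ^ 2 := fun t ht => by
    rw [show (2:ℝ) = ((2:ℕ):ℝ) by norm_num, Real.rpow_natCast]
  have hR1 : (∫ x, g x ^ (2:ℝ)) = ∫ x, g x ^ 2 := by
    congr 1; funext x; exact hrp _ (hg0 x)
  have hR2 : (∫ x, ind x ^ (2:ℝ)) = (volume B).toReal := by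
    have : (fun x => ind x ^ (2:ℝ)) = ind := by
      funext x
      by_cases hx : x ∈ B
      · simp [hind, Set.indicator_of_mem hx]
      · simp [hind, Set.indicator_of_notMem hx,
          Real.zero_rpow (by norm_num : (2:ℝ) ≠ 0)]
    rw [this, hind]
    rw [integral_indicator_const (1:ℝ) measurableSet_closedBall]
    simp [hB, measureReal_def]
  rw [hL, hR1, hR2] at h
  calc ∫ x, g x ≤ (∫ x, g x ^ 2) ^ (1/2:ℝ) * (volume B).toReal ^ (1/2:ℝ) := h
    _ = Real.sqrt ((volume B).toReal) * Real.sqrt (∫ x, g x ^ 2) := by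
      rw [← Real.sqrt_eq_rpow, ← Real.sqrt_eq_rpow, mul_comm]

/-- Poincaré-type inequality -/
lemma poincare {R : ℝ} (hv : ContDiff ℝ 1 v) (h2v : HasCompactSupport v)
    (hsupp : tsupport v ⊆ Metric.closedBall 0 R) :
    Real.sqrt (∫ x, enq v x) ≤
      (2 * Ksob * Real.sqrt ((volume (Metric.closedBall (0:E2) R)).toReal)) *
        Real.sqrt (∫ x, gsq v x) := by
  set VB := Real.sqrt ((volume (Metric.closedBall (0:E2) R)).toReal) with hVB
  have hVB0 : 0 ≤ VB := Real.sqrt_nonneg _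
  -- step i
  have hnc : Continuous fun x => ‖v x‖ := hv.continuous.norm
  have hni : Integrable (fun x => 2 * ‖v x‖ ^ 2) :=
    (continuous_const.mul (hnc.pow 2)).integrable_of_hasCompactSupport
      (hcs_cmul 2 (hcs_sq h2v.norm))
  have hei : Integrable (enq v) :=
    (enq_cont hv.continuous).integrable_of_hasCompactSupport (enq_hcs h2v)
  have h1 : (∫ x, enq v x) ≤ 2 * ∫ x, ‖v x‖ ^ 2 := by
    rw [← integral_const_mul]
    exact integral_mono hei hni fun x => by
      simpa [enq] using sq_sum_le_two_norm_sq (v x)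
  -- step ii : Sobolev
  have hsob := sobolev_real hv h2v
  -- step iii : Hölder with indicator
  have hDc : Continuous fun x => ‖fderiv ℝ v x‖ := (hv.continuous_fderiv one_ne_zero).norm
  have hDsupp : support (fun x => ‖fderiv ℝ v x‖) ⊆ Metric.closedBall 0 R := by
    intro x hx
    apply hsupp
    apply support_fderiv_subset ℝ
    simp only [Function.mem_support] at hx ⊢
    intro h0
    simp [h0] at hx
  have hDhcs : HasCompactSupport fun x => ‖fderiv ℝ v x‖ :=
    (HasCompactSupport.fderiv ℝ h2v).norm
  have h3 := holder_ind hDc hDhcs (fun x => norm_nonneg _) hDsupp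
  -- step iv
  have hgi : Integrable (fun x => 2 * gsq v x) :=
    (continuous_const.mul (gsq_cont hv)).integrable_of_hasCompactSupport
      (hcs_cmul 2 (gsq_hcs h2v))
  have hDi2 : Integrable (fun x => ‖fderiv ℝ v x‖ ^ 2) :=
    (hDc.pow 2).integrable_of_hasCompactSupport (hcs_sq hDhcs)
  have h4 : (∫ x, ‖fderiv ℝ v x‖ ^ 2) ≤ 2 * ∫ x, gsq v x := by
    rw [← integral_const_mul]
    refine integral_mono hDi2 hgi fun x => ?_
    have := opnorm_le (fderiv ℝ v x)
    calc ‖fderiv ℝ v x‖ ^ 2 ≤ (Real.sqrt 2 * Real.sqrt (gsq v x)) ^ 2 := by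
          apply sq_le_sq' _ this
          have : 0 ≤ Real.sqrt 2 * Real.sqrt (gsq v x) := by positivity
          linarith [norm_nonneg (fderiv ℝ v x)]
      _ = 2 * gsq v x := by
          rw [mul_pow, Real.sq_sqrt (by norm_num : (0:ℝ) ≤ 2), Real.sq_sqrt (gsq_nonneg v x)]
  -- combine
  calc Real.sqrt (∫ x, enq v x) ≤ Real.sqrt (2 * ∫ x, ‖v x‖ ^ 2) := Real.sqrt_le_sqrt h1
    _ = Real.sqrt 2 * Real.sqrt (∫ x, ‖v x‖ ^ 2) := by
        rw [Real.sqrt_mul (by norm_num)]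
    _ ≤ Real.sqrt 2 * (Ksob * ∫ x, ‖fderiv ℝ v x‖) :=
        mul_le_mul_of_nonneg_left hsob (Real.sqrt_nonneg 2)
    _ ≤ Real.sqrt 2 * (Ksob * (VB * Real.sqrt (∫ x, ‖fderiv ℝ v x‖ ^ 2))) := by
        apply mul_le_mul_of_nonneg_left _ (Real.sqrt_nonneg 2)
        exact mul_le_mul_of_nonneg_left h3 Ksob_nonneg
    _ ≤ Real.sqrt 2 * (Ksob * (VB * Real.sqrt (2 * ∫ x, gsq v x))) := by
        apply mul_le_mul_of_nonneg_left _ (Real.sqrt_nonneg 2)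
        apply mul_le_mul_of_nonneg_left _ Ksob_nonneg
        apply mul_le_mul_of_nonneg_left _ hVB0
        exact Real.sqrt_le_sqrt h4
    _ = (2 * Ksob * VB) * Real.sqrt (∫ x, gsq v x) := by
        rw [Real.sqrt_mul (by norm_num : (0:ℝ) ≤ 2)]
        have h2 : Real.sqrt 2 * Real.sqrt 2 = 2 := Real.mul_self_sqrt (by norm_num)
        linear_combination (Ksob * VB * Real.sqrt (∫ x, gsq v x)) * h2

end LP

section main
variable {u v w : E2 → E2}

lemma cT_bound (hu : ContDiff ℝ 1 u) (h2u : HasCompactSupport u)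
    (hv : ContDiff ℝ 1 v) (h2v : HasCompactSupport v)
    (hw : ContDiff ℝ 1 w) (h2w : HasCompactSupport w) :
    |∫ x, convTerm u v w x| ≤ Real.sqrt (∫ x, gsq v x) *
      Real.sqrt (Real.sqrt (∫ x, (enq u x) ^ 2) * Real.sqrt (∫ x, (enq w x) ^ 2)) := by
  have hcti : Integrable (convTerm u v w) :=
    (conv_cont hu.continuous hv hw.continuous).integrable_of_hasCompactSupport
      (HasCompactSupport.of_support_subset_isCompact h2w conv_supp)
  -- dominating function
  set g : E2 → ℝ := fun x => Real.sqrt (enq u x) * Real.sqrt (enq w x) with hgdef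
  have hgc : Continuous g := (sqrt_enq_cont hu.continuous).mul (sqrt_enq_cont hw.continuous)
  have hgs : HasCompactSupport g := (sqrt_enq_supp h2u).mul_right
  have hdomc : Continuous fun x => Real.sqrt (gsq v x) * g x := (sqrt_gsq_cont hv).mul hgc
  have hdoms : HasCompactSupport fun x => Real.sqrt (gsq v x) * g x := hgs.mul_left
  have h1 : |∫ x, convTerm u v w x| ≤ ∫ x, |convTerm u v w x| := by
    simpa [Real.norm_eq_abs] using
      norm_integral_le_integral_norm (μ := (volume : Measure E2)) (convTerm u v w)
  have h2 : (∫ x, |convTerm u v w x|) ≤ ∫ x, Real.sqrt (gsq v x) * g x := by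
    refine integral_mono hcti.abs (hdomc.integrable_of_hasCompactSupport hdoms) fun x => ?_
    simpa [convTerm, gsq, enq, hgdef] using conv_pointwise (fderiv ℝ v x) (u x) (w x)
  have h3 : (∫ x, Real.sqrt (gsq v x) * g x) ≤
      Real.sqrt (∫ x, gsq v x) * Real.sqrt (∫ x, g x ^ 2) := by
    have := myCS (sqrt_gsq_cont hv) (sqrt_gsq_supp h2v) hgc hgs
      (fun x => Real.sqrt_nonneg _) (fun x => mul_nonneg (Real.sqrt_nonneg _) (Real.sqrt_nonneg _))
    simpa [Real.sq_sqrt (gsq_nonneg v _)] using this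
  have h4 : (∫ x, g x ^ 2) ≤ Real.sqrt (∫ x, (enq u x) ^ 2) * Real.sqrt (∫ x, (enq w x) ^ 2) := by
    have e : ∀ x, g x ^ 2 = enq u x * enq w x := fun x => by
      rw [hgdef, mul_pow, Real.sq_sqrt (enq_nonneg u x), Real.sq_sqrt (enq_nonneg w x)]
    rw [show (fun x => g x ^ 2) = fun x => enq u x * enq w x from funext e]
    exact myCS (enq_cont hu.continuous) (enq_hcs h2u) (enq_cont hw.continuous) (enq_hcs h2w)
      (enq_nonneg u) (enq_nonneg w)
  calc |∫ x, convTerm u v w x| ≤ ∫ x, Real.sqrt (gsq v x) * g x := le_trans h1 h2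
    _ ≤ Real.sqrt (∫ x, gsq v x) * Real.sqrt (∫ x, g x ^ 2) := h3
    _ ≤ Real.sqrt (∫ x, gsq v x) *
        Real.sqrt (Real.sqrt (∫ x, (enq u x) ^ 2) * Real.sqrt (∫ x, (enq w x) ^ 2)) := by
        apply mul_le_mul_of_nonneg_left (Real.sqrt_le_sqrt h4) (Real.sqrt_nonneg _)

/-- Ladyzhenskaya-type continuity bound (2.16) for the velocity transport form:
`|B(u, v, w)| ≤ C ‖u‖_{L²}^{1/2} ‖∇u‖_{L²}^{1/2} ‖∇v‖_{L²} ‖∇w‖_{L²}`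
with `C` depending only on `Ω`. -/
theorem Bform_ladyzhenskaya_bound
    (Ω : Set (Fin 2 → ℝ)) (hΩo : IsOpen Ω) (hΩb : Bornology.IsBounded Ω) :
    ∃ C > 0, ∀ u v w : (Fin 2 → ℝ) → (Fin 2 → ℝ),
      ContDiff ℝ 1 u → HasCompactSupport u → tsupport u ⊆ Ω →
      ContDiff ℝ 1 v → HasCompactSupport v → tsupport v ⊆ Ω →
      ContDiff ℝ 1 w → HasCompactSupport w → tsupport w ⊆ Ω →
      |Bform u v w| ≤
        C * Real.sqrt (normL2 u) * Real.sqrt (gradL2 u) * gradL2 v * gradL2 w := by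
  obtain ⟨R, hR⟩ := hΩb.subset_closedBall 0
  set CL : ℝ := 2 * Real.sqrt 2 * Ksob with hCL
  set CP : ℝ := 2 * Ksob * Real.sqrt ((volume (Metric.closedBall (0:E2) R)).toReal) with hCP
  have hCL0 : 0 ≤ CL := by
    have := Ksob_nonneg; positivity
  have hCP0 : 0 ≤ CP := by
    have := Ksob_nonneg; positivity
  refine ⟨CL * Real.sqrt CP + 1, by positivity, ?_⟩
  intro u v w hu h2u hsu hv h2v hsv hw h2w hsw
  -- notation
  set Nu : ℝ := Real.sqrt (∫ x, enq u x) with hNu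
  set Gu : ℝ := Real.sqrt (∫ x, gsq u x) with hGu
  set Gv : ℝ := Real.sqrt (∫ x, gsq v x) with hGv
  set Gw : ℝ := Real.sqrt (∫ x, gsq w x) with hGw
  set Nw : ℝ := Real.sqrt (∫ x, enq w x) with hNw
  set Nv : ℝ := Real.sqrt (∫ x, enq v x) with hNv
  have hNu0 : 0 ≤ Nu := Real.sqrt_nonneg _
  have hGu0 : 0 ≤ Gu := Real.sqrt_nonneg _
  have hGv0 : 0 ≤ Gv := Real.sqrt_nonneg _
  have hGw0 : 0 ≤ Gw := Real.sqrt_nonneg _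
  have hnormL2 : normL2 u = Nu := rfl
  have hgradL2u : gradL2 u = Gu := rfl
  have hgradL2v : gradL2 v = Gv := rfl
  have hgradL2w : gradL2 w = Gw := rfl
  -- the L4 bounds
  set Su : ℝ := Real.sqrt (∫ x, (enq u x) ^ 2) with hSu
  set Sw : ℝ := Real.sqrt (∫ x, (enq w x) ^ 2) with hSw
  set Sv : ℝ := Real.sqrt (∫ x, (enq v x) ^ 2) with hSv
  have hSu0 : 0 ≤ Su := Real.sqrt_nonneg _
  have hSw0 : 0 ≤ Sw := Real.sqrt_nonneg _
  have hSv0 : 0 ≤ Sv := Real.sqrt_nonneg _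
  have hladyu : Su ≤ CL * (Nu * Gu) := lady hu h2u
  have hladyw : Sw ≤ CL * (Nw * Gw) := lady hw h2w
  have hladyv : Sv ≤ CL * (Nv * Gv) := lady hv h2v
  have hpw : Nw ≤ CP * Gw := poincare hw h2w (hsw.trans hR)
  have hpv : Nv ≤ CP * Gv := poincare hv h2v (hsv.trans hR)
  have hSwB : Sw ≤ CL * ((CP * Gw) * Gw) := by
    refine le_trans hladyw (mul_le_mul_of_nonneg_left ?_ hCL0)
    exact mul_le_mul_of_nonneg_right hpw hGw0
  have hSvB : Sv ≤ CL * ((CP * Gv) * Gv) := by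
    refine le_trans hladyv (mul_le_mul_of_nonneg_left ?_ hCL0)
    exact mul_le_mul_of_nonneg_right hpv hGv0
  -- key quantity
  have hkey : ∀ (G : ℝ), 0 ≤ G → ∀ (S : ℝ), 0 ≤ S → S ≤ CL * ((CP * G) * G) →
      Real.sqrt (Su * S) ≤ CL * Real.sqrt CP * (Real.sqrt Nu * Real.sqrt Gu) * G := by
    intro G hG0 S hS0 hSB
    have hmul : Su * S ≤ (CL * (Nu * Gu)) * (CL * ((CP * G) * G)) :=
      mul_le_mul hladyu hSB hS0 (by positivity)
    have hiden : (CL * (Nu * Gu)) * (CL * ((CP * G) * G))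
        = (CL * Real.sqrt CP * (Real.sqrt Nu * Real.sqrt Gu) * G) ^ 2 := by
      simp only [mul_pow]
      rw [Real.sq_sqrt hCP0, Real.sq_sqrt hNu0, Real.sq_sqrt hGu0]
      ring
    calc Real.sqrt (Su * S) ≤ Real.sqrt ((CL * Real.sqrt CP * (Real.sqrt Nu * Real.sqrt Gu) * G) ^ 2) := by
          rw [← hiden]; exact Real.sqrt_le_sqrt hmul
      _ = CL * Real.sqrt CP * (Real.sqrt Nu * Real.sqrt Gu) * G :=
          Real.sqrt_sq (by positivity)
  -- bounds on the two convective integrals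
  have hI1 : |∫ x, convTerm u v w x| ≤
      Gv * (CL * Real.sqrt CP * (Real.sqrt Nu * Real.sqrt Gu) * Gw) := by
    refine le_trans (cT_bound hu h2u hv h2v hw h2w) ?_
    exact mul_le_mul_of_nonneg_left (hkey Gw hGw0 Sw hSw0 hSwB) hGv0
  have hI2 : |∫ x, convTerm u w v x| ≤
      Gw * (CL * Real.sqrt CP * (Real.sqrt Nu * Real.sqrt Gu) * Gv) := by
    refine le_trans (cT_bound hu h2u hw h2w hv h2v) ?_
    exact mul_le_mul_of_nonneg_left (hkey Gv hGv0 Sv hSv0 hSvB) hGw0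
  clear_value Nu Gu Gv Gw Nw Nv Su Sw Sv
  -- integration by parts identity
  have hibp := ibp hu h2u hv h2v hw h2w
  have hBeq : Bform u v w =
      (1/2) * (∫ x, convTerm u v w x) - (1/2) * (∫ x, convTerm u w v x) := by
    unfold Bform
    linarith [hibp]
  rw [hBeq, hnormL2, hgradL2u, hgradL2v, hgradL2w]
  have habs : |(1/2) * (∫ x, convTerm u v w x) - (1/2) * (∫ x, convTerm u w v x)|
      ≤ (1/2) * |∫ x, convTerm u v w x| + (1/2) * |∫ x, convTerm u w v x| := by
    calc |(1/2) * (∫ x, convTerm u v w x) - (1/2) * (∫ x, convTerm u w v x)|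
        ≤ |(1/2) * (∫ x, convTerm u v w x)| + |(1/2) * (∫ x, convTerm u w v x)| :=
          abs_sub _ _
      _ = (1/2) * |∫ x, convTerm u v w x| + (1/2) * |∫ x, convTerm u w v x| := by
          rw [abs_mul, abs_mul, abs_of_nonneg (by norm_num : (0:ℝ) ≤ 1/2)]
  refine le_trans habs ?_
  have e1 : Gv * (CL * Real.sqrt CP * (Real.sqrt Nu * Real.sqrt Gu) * Gw)
      = CL * Real.sqrt CP * Real.sqrt Nu * Real.sqrt Gu * Gv * Gw := by ring
  have e2 : Gw * (CL * Real.sqrt CP * (Real.sqrt Nu * Real.sqrt Gu) * Gv)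
      = CL * Real.sqrt CP * Real.sqrt Nu * Real.sqrt Gu * Gv * Gw := by ring
  rw [e1] at hI1
  rw [e2] at hI2
  have hstep : (1/2) * |∫ x, convTerm u v w x| + (1/2) * |∫ x, convTerm u w v x|
      ≤ CL * Real.sqrt CP * Real.sqrt Nu * Real.sqrt Gu * Gv * Gw := by
    linarith
  refine le_trans hstep ?_
  have hfac : 0 ≤ Real.sqrt Nu * (Real.sqrt Gu * (Gv * Gw)) := by positivity
  have hcc : CL * Real.sqrt CP ≤ CL * Real.sqrt CP + 1 := by linarith
  have := mul_le_mul_of_nonneg_right hcc hfac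
  calc CL * Real.sqrt CP * Real.sqrt Nu * Real.sqrt Gu * Gv * Gw
      = CL * Real.sqrt CP * (Real.sqrt Nu * (Real.sqrt Gu * (Gv * Gw))) := by ring
    _ ≤ (CL * Real.sqrt CP + 1) * (Real.sqrt Nu * (Real.sqrt Gu * (Gv * Gw))) := this
    _ = (CL * Real.sqrt CP + 1) * Real.sqrt Nu * Real.sqrt Gu * Gv * Gw := by ring
end main
end ibp
end
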